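/- Let c, d, k ∈ ℝ with c > 0 and d² − 4ck < 0, and define f(u) = √(c u² + d u + k) and a(u) = arctan((2c/√(4ck − d²))(u + d/(2c))). Then 2 f'(u) a'(u) + f(u) a''(u) = 0 for all u ∈ ℝ. -/

import Mathlib

open Real Set

theorem stmt_6 (c d k : ℝ) (hc : 0 < c) (hΔ : d ^ 2 - 4 * c * k < 0)
    (f A : ℝ → ℝ)
    (hf : ∀ u, f u = Real.sqrt (c * u ^ 2 + d * u + k))
    (hA : ∀ u, A u =
      Real.arctan ((2 * c / Real.sqrt (4 * c * k - d ^ 2)) * (u + d / (2 * c)))) :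
    ∀ u : ℝ, 2 * deriv f u * deriv A u + f u * deriv (deriv A) u = 0 := by
  have hs : (0:ℝ) < 4 * c * k - d ^ 2 := by nlinarith
  have hss : 0 < Real.sqrt (4 * c * k - d ^ 2) := Real.sqrt_pos.mpr hs
  have hssq : Real.sqrt (4 * c * k - d ^ 2) ^ 2 = 4 * c * k - d ^ 2 :=
    Real.sq_sqrt hs.le
  have hQ : ∀ u : ℝ, 0 < c * u ^ 2 + d * u + k := by
    intro u; nlinarith [sq_nonneg (2 * c * u + d)]
  have hsq : ∀ u : ℝ, 0 < Real.sqrt (c * u ^ 2 + d * u + k) :=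
    fun u => Real.sqrt_pos.mpr (hQ u)
  have hQd : ∀ u : ℝ, HasDerivAt (fun u => c * u ^ 2 + d * u + k) (2 * c * u + d) u := by
    intro u
    have h := ((hasDerivAt_pow 2 u).const_mul c).add
      (((hasDerivAt_id u).const_mul d).add_const k)
    convert h using 1
    · rfl
    · rfl
    · funext x; simp only [id_eq, Pi.add_apply]; ring
    · norm_num; ring
  have hf' : ∀ u, HasDerivAt f ((2 * c * u + d) / (2 * Real.sqrt (c * u ^ 2 + d * u + k))) u := by
    intro u
    have h := (hQd u).sqrt (hQ u).ne'
    have hfe : f = fun u => Real.sqrt (c * u ^ 2 + d * u + k) := funext hf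
    rw [hfe]
    exact h
  have hA' : ∀ u, HasDerivAt A
      (Real.sqrt (4 * c * k - d ^ 2) / (2 * (c * u ^ 2 + d * u + k))) u := by
    intro u
    have hlin : HasDerivAt (fun u : ℝ =>
        (2 * c / Real.sqrt (4 * c * k - d ^ 2)) * (u + d / (2 * c)))
        (2 * c / Real.sqrt (4 * c * k - d ^ 2)) u := by
      have h := ((hasDerivAt_id u).add_const (d / (2 * c))).const_mul
        (2 * c / Real.sqrt (4 * c * k - d ^ 2))
      convert h using 1
      · rfl
      · rfl
      · rfl
      ring
    have h := (Real.hasDerivAt_arctan _).comp u hlin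
    have hAe : A = fun u => Real.arctan
        ((2 * c / Real.sqrt (4 * c * k - d ^ 2)) * (u + d / (2 * c))) := funext hA
    rw [hAe]
    convert h using 1
    · rfl
    · rfl
    · rfl
    have hx2 : ((2 * c / Real.sqrt (4 * c * k - d ^ 2)) * (u + d / (2 * c))) ^ 2
        = (2 * c * u + d) ^ 2 / (4 * c * k - d ^ 2) := by
      rw [mul_pow, div_pow, hssq]
      field_simp
    rw [hx2]
    have h2 := (hQ u).ne'
    have h3 := hs.ne'
    have h4 := hss.ne'
    field_simp
    rw [hssq, div_eq_iff (by nlinarith [hQ u])]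
    ring
  have hderivA : deriv A = fun u =>
      Real.sqrt (4 * c * k - d ^ 2) / (2 * (c * u ^ 2 + d * u + k)) :=
    funext fun u => (hA' u).deriv
  have hA'' : ∀ u, HasDerivAt (deriv A)
      (-(Real.sqrt (4 * c * k - d ^ 2) * (2 * c * u + d)) / (2 * (c * u ^ 2 + d * u + k) ^ 2)) u := by
    intro u
    rw [hderivA]
    have h := (hasDerivAt_const u (Real.sqrt (4 * c * k - d ^ 2))).div
      ((hQd u).const_mul 2) (mul_pos two_pos (hQ u)).ne'
    convert h using 1
    · rfl
    · rfl
    · rfl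
    have := (hQ u).ne'
    field_simp
    ring
  intro u
  rw [(hf' u).deriv, (hA'' u).deriv, hf u]
  rw [hderivA]
  have hq2 : Real.sqrt (c * u ^ 2 + d * u + k) ^ 2 = c * u ^ 2 + d * u + k :=
    Real.sq_sqrt (hQ u).le
  have h1 := (hsq u).ne'
  have h2 := (hQ u).ne'
  field_simp
  have e : u * (c * u + d) + k = c * u ^ 2 + d * u + k := by ring
  rw [e, hq2]
  ring
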